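/- Let c > 0 and p > 0 be real numbers. For every B with B₀ < B < 0 there exists a nonconstant, everywhere positive, periodic, twice continuously differentiable function φ : ℝ → ℝ satisfying -φ''(x) + cφ(x) - φ(x)^{p+1}/(p+1) = 0 and E(φ(x), φ'(x)) = B for all x ∈ ℝ. -/

import Mathlib

open Set Filter NNReal

section ODE

variable {E : Type*} [NormedAddCommGroup E] [NormedSpace ℝ E]

/-- Global uniqueness for autonomous Lipschitz ODEs. -/
lemma ode_global_unique {K : ℝ≥0} {v : E → E} (hl : LipschitzWith K v) {α β : ℝ → E}
    (hα : ∀ t, HasDerivAt α (v (α t)) t) (hβ : ∀ t, HasDerivAt β (v (β t)) t)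
    {t₀ : ℝ} (h0 : α t₀ = β t₀) : α = β := by
  funext t
  have ht : t ∈ Ioo (min t t₀ - 1) (max t t₀ + 1) :=
    ⟨by have := min_le_left t t₀; linarith, by have := le_max_left t t₀; linarith⟩
  have ht₀ : t₀ ∈ Ioo (min t t₀ - 1) (max t t₀ + 1) :=
    ⟨by have := min_le_right t t₀; linarith, by have := le_max_right t t₀; linarith⟩
  exact ODE_solution_unique_of_mem_Ioo (v := fun _ => v) (s := fun _ => univ)
    (fun _ _ => hl.lipschitzOnWith) ht₀
    (fun s _ => ⟨hα s, mem_univ _⟩) (fun s _ => ⟨hβ s, mem_univ _⟩) h0 (Ioo_subset_Ioo le_rfl le_rfl ht)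

/-- Global existence for bounded Lipschitz autonomous ODEs. -/
lemma ode_global_exist [CompleteSpace E] {K : ℝ≥0} {C : ℝ} {v : E → E}
    (hl : LipschitzWith K v) (hb : ∀ x, ‖v x‖ ≤ C) (x₀ : E) :
    ∃ α : ℝ → E, α 0 = x₀ ∧ ∀ t, HasDerivAt α (v (α t)) t := by
  have hC : 0 ≤ C := le_trans (norm_nonneg _) (hb x₀)
  have key : ∀ n : ℕ, ∃ f : ℝ → E, f 0 = x₀ ∧
      ∀ t ∈ Ioo (-(n + 1 : ℝ)) (n + 1), HasDerivAt f (v (f t)) t := by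
    intro n
    have hn : (0:ℝ) < n + 1 := by positivity
    have hpl : IsPicardLindelof (fun _ => v) (tmin := -(n + 1 : ℝ)) (tmax := n + 1)
        ⟨0, by constructor <;> linarith⟩ x₀ ⟨C * (n + 1), by positivity⟩ 0 (⟨C, hC⟩ : ℝ≥0) K :=
      { lipschitzOnWith := fun t _ => hl.lipschitzOnWith
        continuousOn := fun x _ => continuousOn_const
        norm_le := fun t _ x _ => hb x
        mul_max_le := by
          have : max ((n:ℝ) + 1 - 0) (0 - -(n + 1)) = (n:ℝ) + 1 := by
            simp
          simp only [NNReal.coe_mk, NNReal.coe_zero]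
          rw [this, sub_zero]
          exact le_rfl }
    obtain ⟨f, hf0, hf⟩ := hpl.exists_eq_forall_mem_Icc_hasDerivWithinAt₀
    exact ⟨f, hf0, fun t ht => (hf t (Ioo_subset_Icc_self ht)).hasDerivAt
      (Icc_mem_nhds ht.1 ht.2)⟩
  choose F hF0 hF using key
  have agree : ∀ (m n : ℕ) (t : ℝ), t ∈ Ioo (-(m + 1 : ℝ)) (m + 1) →
      t ∈ Ioo (-(n + 1 : ℝ)) (n + 1) → F m t = F n t := by
    intro m n t htm htn
    have h0 : (0:ℝ) ∈ Ioo (max (-(m + 1 : ℝ)) (-(n + 1))) (min ((m:ℝ) + 1) (n + 1)) := by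
      constructor
      · apply max_lt <;> [linarith [Nat.cast_nonneg (α := ℝ) m]; linarith [Nat.cast_nonneg (α := ℝ) n]]
      · apply lt_min <;> [linarith [Nat.cast_nonneg (α := ℝ) m]; linarith [Nat.cast_nonneg (α := ℝ) n]]
    have hsub1 : Ioo (max (-(m + 1 : ℝ)) (-(n + 1))) (min ((m:ℝ) + 1) (n + 1)) ⊆
        Ioo (-(m + 1 : ℝ)) (m + 1) := Ioo_subset_Ioo (le_max_left _ _) (min_le_left _ _)
    have hsub2 : Ioo (max (-(m + 1 : ℝ)) (-(n + 1))) (min ((m:ℝ) + 1) (n + 1)) ⊆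
        Ioo (-(n + 1 : ℝ)) (n + 1) := Ioo_subset_Ioo (le_max_right _ _) (min_le_right _ _)
    exact ODE_solution_unique_of_mem_Ioo (v := fun _ => v) (s := fun _ => univ)
      (fun _ _ => hl.lipschitzOnWith) h0
      (fun s hs => ⟨hF m s (hsub1 hs), mem_univ _⟩)
      (fun s hs => ⟨hF n s (hsub2 hs), mem_univ _⟩)
      ((hF0 m).trans (hF0 n).symm) ⟨max_lt htm.1 htn.1, lt_min htm.2 htn.2⟩
  refine ⟨fun t => F ⌈|t|⌉₊ t, by simpa using hF0 0, fun t => ?_⟩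
  set n := ⌈|t|⌉₊ with hn
  have hmem : ∀ s : ℝ, s ∈ Ioo (-(⌈|s|⌉₊ + 1 : ℝ)) (⌈|s|⌉₊ + 1) := by
    intro s
    have h1 : |s| ≤ (⌈|s|⌉₊ : ℝ) := Nat.le_ceil _
    constructor
    · have := neg_abs_le s; linarith
    · have := le_abs_self s; linarith
  have heq : (fun s => F ⌈|s|⌉₊ s) =ᶠ[nhds t] F n := by
    have : Ioo (-(n + 1 : ℝ)) (n + 1) ∈ nhds t := Ioo_mem_nhds (hmem t).1 (hmem t).2
    filter_upwards [this] with s hs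
    exact agree _ _ _ (hmem s) hs
  have hd : HasDerivAt (F n) (v (F n t)) t := hF n t (hmem t)
  have h2 := hd.congr_of_eventuallyEq heq
  have h3 : F n t = F ⌈|t|⌉₊ t := rfl
  simpa [← h3] using h2

end ODE
open Set Filter NNReal

noncomputable section ZK

/-- potential -/
def Vf (c p : ℝ) : ℝ → ℝ := fun s => -(c * s ^ 2) / 2 + s ^ (p + 2) / ((p + 1) * (p + 2))

/-- force -/
def ff (c p : ℝ) : ℝ → ℝ := fun s => c * s - s ^ (p + 1) / (p + 1)

variable {c p : ℝ}

lemma continuous_rpow_const' (q : ℝ) (hq : 0 < q) : Continuous fun s : ℝ => s ^ q :=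
  continuous_iff_continuousAt.mpr fun x => Real.continuousAt_rpow_const x q (Or.inr hq.le)

lemma continuous_ff (hp : 0 < p) : Continuous (ff c p) := by
  exact (continuous_const.mul continuous_id).sub
    ((continuous_rpow_const' _ (by linarith)).div_const _)

lemma continuous_Vf (hp : 0 < p) : Continuous (Vf c p) := by
  exact (((continuous_const.mul (continuous_pow 2)).neg).div_const 2).add
    ((continuous_rpow_const' _ (by linarith)).div_const _)

lemma hasDerivAt_Vf (hp : 0 < p) (s : ℝ) : HasDerivAt (Vf c p) (-(ff c p s)) s := by
  have h1 : HasDerivAt (fun s : ℝ => s ^ (p + 2)) ((p + 2) * s ^ (p + 1)) s := by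
    have := Real.hasDerivAt_rpow_const (x := s) (p := p + 2) (Or.inr (by linarith))
    convert this using 2
    ring
  have h2 : HasDerivAt (fun s : ℝ => -(c * s ^ 2) / 2) (-(c * s)) s := by
    have : HasDerivAt (fun s : ℝ => s ^ 2) (2 * s ^ 1) s := by
      simpa using hasDerivAt_pow 2 s
    refine (((this.const_mul c).neg).div_const 2).congr_deriv ?_
    ring
  have := h2.add (h1.div_const ((p + 1) * (p + 2)))
  refine this.congr_deriv ?_
  have hp1 : p + 1 ≠ 0 := by linarith
  have hp2 : p + 2 ≠ 0 := by linarith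
  simp only [ff]
  first
  | (field_simp; ring)
  | field_simp
  | ring

lemma hasDerivAt_ff (hp : 0 < p) (s : ℝ) : HasDerivAt (ff c p) (c - s ^ p) s := by
  have h1 : HasDerivAt (fun s : ℝ => s ^ (p + 1)) ((p + 1) * s ^ p) s := by
    have := Real.hasDerivAt_rpow_const (x := s) (p := p + 1) (Or.inr (by linarith))
    convert this using 2
    ring
  have := (hasDerivAt_id s |>.const_mul c).sub (h1.div_const (p + 1))
  refine this.congr_deriv ?_
  have hp1 : p + 1 ≠ 0 := by linarith
  first
  | (field_simp; ring)
  | field_simp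
  | ring

/-- clamp to an interval -/
def clampI (lo hi : ℝ) : ℝ → ℝ := fun x => max lo (min hi x)

lemma lipschitzWith_clampI (lo hi : ℝ) : LipschitzWith 1 (clampI lo hi) :=
  (LipschitzWith.id.const_min hi).const_max lo

lemma clampI_mem {lo hi : ℝ} (h : lo ≤ hi) (x : ℝ) : clampI lo hi x ∈ Icc lo hi := by
  unfold clampI
  constructor
  · exact le_max_left _ _
  · exact max_le h (min_le_left _ _)

lemma clampI_eq {lo hi x : ℝ} (hx : x ∈ Icc lo hi) : clampI lo hi x = x := by
  unfold clampI
  rw [min_eq_right hx.2, max_eq_right hx.1]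

lemma clampI_eq_hi {lo hi x : ℝ} (h : lo ≤ hi) (hx : hi ≤ x) : clampI lo hi x = hi := by
  unfold clampI
  rw [min_eq_left hx, max_eq_right h]

lemma clampI_eq_lo {lo hi x : ℝ} (hx : x ≤ lo) : clampI lo hi x = lo := by
  unfold clampI
  rw [max_eq_left (le_trans (min_le_right _ _) hx)]

lemma clampI_neg {M y : ℝ} (hM : 0 ≤ M) : clampI (-M) M (-y) = -(clampI (-M) M y) := by
  unfold clampI
  rcases le_total y M with h1 | h1 <;> rcases le_total (-M) y with h2 | h2 <;>
    simp [min_def, max_def] <;> split_ifs <;> linarith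

lemma abs_clampI_le {M : ℝ} (hM : 0 ≤ M) (y : ℝ) : |clampI (-M) M y| ≤ M := by
  have := clampI_mem (by linarith : -M ≤ M) y
  rw [abs_le]; exact ⟨this.1, this.2⟩

end ZK

section part3

variable {c p : ℝ}

lemma sStar_base_pos (hc : 0 < c) (hp : 0 < p) : (0:ℝ) < (p+1)*c := by nlinarith

lemma sStar_pos (hc : 0 < c) (hp : 0 < p) : 0 < ((p+1)*c) ^ (1/p : ℝ) :=
  Real.rpow_pos_of_pos (sStar_base_pos hc hp) _

lemma rpow_inv_rpow' {x : ℝ} (hx : 0 < x) (hp : 0 < p) : (x ^ (1/p : ℝ)) ^ p = x := by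
  rw [← Real.rpow_mul hx.le, one_div, inv_mul_cancel₀ hp.ne', Real.rpow_one]

lemma sStar_rpow (hc : 0 < c) (hp : 0 < p) : (((p+1)*c) ^ (1/p : ℝ)) ^ p = (p+1)*c :=
  rpow_inv_rpow' (sStar_base_pos hc hp) hp

lemma ff_pos (hc : 0 < c) (hp : 0 < p) {s : ℝ} (h0 : 0 < s) (hs : s < ((p+1)*c) ^ (1/p : ℝ)) :
    0 < ff c p s := by
  have hsp : s ^ p < (p+1)*c := by
    calc s ^ p < (((p+1)*c) ^ (1/p:ℝ)) ^ p := Real.rpow_lt_rpow h0.le hs hp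
    _ = (p+1)*c := sStar_rpow hc hp
  have hsp1 : s ^ (p+1) = s ^ p * s := by
    rw [Real.rpow_add h0, Real.rpow_one]
  have hp1 : (0:ℝ) < p + 1 := by linarith
  have key : ff c p s = s * ((p+1)*c - s^p) / (p+1) := by
    unfold ff; rw [hsp1]; field_simp
  rw [key]
  exact div_pos (mul_pos h0 (by linarith)) hp1

lemma ff_neg (hc : 0 < c) (hp : 0 < p) {s : ℝ} (hs : ((p+1)*c) ^ (1/p : ℝ) < s) :
    ff c p s < 0 := by
  have h0 : 0 < s := lt_trans (sStar_pos hc hp) hs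
  have hsp : (p+1)*c < s ^ p := by
    calc (p+1)*c = (((p+1)*c) ^ (1/p:ℝ)) ^ p := (sStar_rpow hc hp).symm
    _ < s ^ p := Real.rpow_lt_rpow (sStar_pos hc hp).le hs hp
  have hsp1 : s ^ (p+1) = s ^ p * s := by
    rw [Real.rpow_add h0, Real.rpow_one]
  have hp1 : (0:ℝ) < p + 1 := by linarith
  have key : ff c p s = s * ((p+1)*c - s^p) / (p+1) := by
    unfold ff; rw [hsp1]; field_simp
  rw [key]
  apply div_neg_of_neg_of_pos _ hp1
  exact mul_neg_of_pos_of_neg h0 (by linarith)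

lemma Vf_zero (hp : 0 < p) : Vf c p 0 = 0 := by
  unfold Vf
  rw [Real.zero_rpow (by linarith)]
  norm_num

lemma Vf_sStar (hc : 0 < c) (hp : 0 < p) :
    Vf c p (((p+1)*c) ^ (1/p : ℝ)) =
      -(p * (p + 1) ^ (2 / p : ℝ) * c ^ ((p + 2) / p : ℝ)) / (2 * (p + 2)) := by
  set s := ((p+1)*c) ^ (1/p : ℝ) with hsdef
  have hs0 : 0 < s := sStar_pos hc hp
  have hsq : s ^ (2:ℕ) = (p+1) ^ (2/p : ℝ) * c ^ (2/p : ℝ) := by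
    rw [← Real.rpow_natCast s 2, hsdef, ← Real.rpow_mul (sStar_base_pos hc hp).le,
      Real.mul_rpow (by linarith : (0:ℝ) ≤ p+1) hc.le]
    norm_num
    rw [mul_comm p⁻¹ 2, ← div_eq_mul_inv]
  have hsp2 : s ^ (p+2 : ℝ) = ((p+1)*c) * ((p+1) ^ (2/p : ℝ) * c ^ (2/p : ℝ)) := by
    have : s ^ (p+2:ℝ) = s ^ p * s ^ (2:ℝ) := by rw [← Real.rpow_add hs0]
    rw [this, sStar_rpow hc hp, ← hsq, Real.rpow_two, sq]
  have hc2 : c * (c ^ (2/p : ℝ)) = c ^ ((p+2)/p : ℝ) := by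
    nth_rewrite 1 [← Real.rpow_one c]
    rw [← Real.rpow_add hc]
    congr 1
    field_simp
  unfold Vf
  rw [hsp2, hsq]
  have hp1 : p + 1 ≠ 0 := by linarith
  have hp2 : p + 2 ≠ 0 := by linarith
  rw [← hc2]
  field_simp
  ring

lemma strictAntiOn_Vf (hc : 0 < c) (hp : 0 < p) :
    StrictAntiOn (Vf c p) (Icc 0 (((p+1)*c) ^ (1/p : ℝ))) := by
  apply strictAntiOn_of_deriv_neg (convex_Icc _ _) (continuous_Vf hp).continuousOn
  intro x hx
  rw [interior_Icc] at hx
  rw [(hasDerivAt_Vf hp x).deriv]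
  simpa using ff_pos hc hp hx.1 hx.2

lemma strictMonoOn_Vf (hc : 0 < c) (hp : 0 < p) :
    StrictMonoOn (Vf c p) (Ici (((p+1)*c) ^ (1/p : ℝ))) := by
  apply strictMonoOn_of_deriv_pos (convex_Ici _) (continuous_Vf hp).continuousOn
  intro x hx
  rw [interior_Ici] at hx
  rw [(hasDerivAt_Vf hp x).deriv]
  simpa using ff_neg hc hp hx

end part3

section part4

variable {c p B : ℝ}

lemma exists_ab (hc : 0 < c) (hp : 0 < p)
    (hB0' : Vf c p (((p+1)*c) ^ (1/p : ℝ)) < B) (hB : B < 0) :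
    ∃ a b : ℝ, 0 < a ∧ a < ((p+1)*c) ^ (1/p : ℝ) ∧ ((p+1)*c) ^ (1/p : ℝ) < b ∧
      Vf c p a = B ∧ Vf c p b = B := by
  set S := ((p+1)*c) ^ (1/p : ℝ) with hSdef
  have hS0 : 0 < S := sStar_pos hc hp
  -- left root
  have hmem : B ∈ Ioo (Vf c p S) (Vf c p 0) := by
    rw [Vf_zero hp]; exact ⟨hB0', hB⟩
  have h1 := intermediate_value_Ioo' hS0.le (continuous_Vf hp).continuousOn hmem
  obtain ⟨a, ha, hVa⟩ := h1
  -- right root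
  set q := ((p+1)*(p+2)*c/2) ^ (1/p : ℝ) with hqdef
  have hbase : (0:ℝ) < (p+1)*(p+2)*c/2 := by
    have := mul_pos (mul_pos (show (0:ℝ)<p+1 by linarith) (show (0:ℝ)<p+2 by linarith)) hc
    linarith
  have hq0 : 0 < q := Real.rpow_pos_of_pos hbase _
  set s₁ := max (S + 1) (q + 1) with hs₁def
  have hs₁S : S < s₁ := lt_of_lt_of_le (by linarith) (le_max_left _ _)
  have hs₁q : q < s₁ := lt_of_lt_of_le (by linarith) (le_max_right _ _)
  have hs₁0 : 0 < s₁ := lt_trans hq0 hs₁q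
  have hqp : q ^ p = (p+1)*(p+2)*c/2 := rpow_inv_rpow' hbase hp
  have hs₁p : (p+1)*(p+2)*c/2 < s₁ ^ p := by
    rw [← hqp]; exact Real.rpow_lt_rpow hq0.le hs₁q hp
  have hVs₁ : 0 < Vf c p s₁ := by
    have hsp2 : s₁ ^ (p+2 : ℝ) = s₁ ^ p * s₁ ^ (2:ℕ) := by
      rw [← Real.rpow_natCast s₁ 2, ← Real.rpow_add hs₁0]
      norm_num
    have key : Vf c p s₁ = (2 * s₁ ^ p - (p+1)*(p+2)*c) * s₁ ^ (2:ℕ) / (2*(p+1)*(p+2)) := by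
      unfold Vf
      rw [hsp2]
      have h1 : p + 1 ≠ 0 := by linarith
      have h2 : p + 2 ≠ 0 := by linarith
      field_simp
      ring
    rw [key]
    apply div_pos _ (by nlinarith)
    apply mul_pos (by linarith) (by positivity)
  have hmem2 : B ∈ Ioo (Vf c p S) (Vf c p s₁) := ⟨hB0', by linarith⟩
  have h2 := intermediate_value_Ioo hs₁S.le (continuous_Vf hp).continuousOn hmem2
  obtain ⟨b, hb, hVb⟩ := h2
  exact ⟨a, b, ha.1, ha.2, hb.1, hVa, hVb⟩

variable {a b : ℝ}

lemma Vf_lt_B (hc : 0 < c) (hp : 0 < p)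
    (ha : 0 < a) (haS : a < ((p+1)*c) ^ (1/p : ℝ)) (hSb : ((p+1)*c) ^ (1/p : ℝ) < b)
    (hVa : Vf c p a = B) (hVb : Vf c p b = B) {x : ℝ} (hx : x ∈ Ioo a b) :
    Vf c p x < B := by
  set S := ((p+1)*c) ^ (1/p : ℝ)
  rcases le_total x S with h | h
  · rw [← hVa]
    exact strictAntiOn_Vf hc hp ⟨ha.le, haS.le⟩ ⟨by linarith [hx.1], h⟩ hx.1
  · rw [← hVb]
    exact strictMonoOn_Vf hc hp h (le_of_lt hSb) hx.2

lemma Vf_le_B (hc : 0 < c) (hp : 0 < p)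
    (ha : 0 < a) (haS : a < ((p+1)*c) ^ (1/p : ℝ)) (hSb : ((p+1)*c) ^ (1/p : ℝ) < b)
    (hVa : Vf c p a = B) (hVb : Vf c p b = B) {x : ℝ} (hx : x ∈ Icc a b) :
    Vf c p x ≤ B := by
  rcases eq_or_lt_of_le hx.1 with h | h
  · rw [← h]; exact le_of_eq hVa
  rcases eq_or_lt_of_le hx.2 with h' | h'
  · rw [h']; exact le_of_eq hVb
  exact (Vf_lt_B hc hp ha haS hSb hVa hVb ⟨h, h'⟩).le

lemma Vf_ge_B₀ (hc : 0 < c) (hp : 0 < p)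
    (ha : 0 < a) {x : ℝ} (hx : x ∈ Icc a b) :
    Vf c p (((p+1)*c) ^ (1/p : ℝ)) ≤ Vf c p x := by
  set S := ((p+1)*c) ^ (1/p : ℝ) with hS
  have hS0 : 0 < S := sStar_pos hc hp
  rcases le_total x S with h | h
  · exact ((strictAntiOn_Vf hc hp).antitoneOn) ⟨by linarith [hx.1], h⟩
      ⟨hS0.le, le_refl S⟩ h
  · exact ((strictMonoOn_Vf hc hp).monotoneOn) (le_refl S : S ∈ Ici S) h h

end part4

noncomputable section part5

open MeasureTheory

/-- modified (clamped) force -/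
def fmod (c p a b : ℝ) : ℝ → ℝ := fun x => ff c p (clampI a b x)

/-- modified potential -/
def Vmod (c p a b B : ℝ) : ℝ → ℝ := fun x => B + ∫ s in b..x, -(fmod c p a b s)

/-- kinetic antiderivative -/
def Gf (M : ℝ) : ℝ → ℝ := fun y => ∫ s in (0:ℝ)..y, clampI (-M) M s

variable {c p a b B M : ℝ}

lemma continuous_fmod (hp : 0 < p) : Continuous (fmod c p a b) :=
  (continuous_ff hp).comp (lipschitzWith_clampI a b).continuous

lemma continuous_clampM : Continuous (clampI (-M) M) :=
  (lipschitzWith_clampI _ _).continuous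

lemma hasDerivAt_Vmod (hp : 0 < p) (x : ℝ) :
    HasDerivAt (Vmod c p a b B) (-(fmod c p a b x)) x := by
  have hcont : Continuous fun s => -(fmod c p a b s) := (continuous_fmod hp).neg
  have := intervalIntegral.integral_hasDerivAt_right
    (hcont.intervalIntegrable b x)
    (hcont.stronglyMeasurableAtFilter volume (nhds x))
    hcont.continuousAt
  have h2 := (hasDerivAt_const x B).add this
  rw [zero_add] at h2
  exact h2

lemma hasDerivAt_Gf (y : ℝ) : HasDerivAt (Gf M) (clampI (-M) M y) y := by
  exact intervalIntegral.integral_hasDerivAt_right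
    (continuous_clampM.intervalIntegrable 0 y)
    (continuous_clampM.stronglyMeasurableAtFilter volume (nhds y))
    continuous_clampM.continuousAt

lemma Vmod_b (hp : 0 < p) : Vmod c p a b B b = B := by
  simp [Vmod]

lemma Vmod_eq_Vf (hp : 0 < p) (hab : a ≤ b) (hVb : Vf c p b = B)
    {x : ℝ} (hx : x ∈ Icc a b) : Vmod c p a b B x = Vf c p x := by
  have hd : ∀ z ∈ Icc a b, HasDerivAt (fun u => Vmod c p a b B u - Vf c p u) 0 z := by
    intro z hz
    have := (hasDerivAt_Vmod (c:=c) (a:=a) (b:=b) (B:=B) hp z).sub (hasDerivAt_Vf (c:=c) hp z)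
    have heq : -(fmod c p a b z) - -(ff c p z) = 0 := by
      unfold fmod
      rw [clampI_eq hz]
      ring
    rwa [heq] at this
  have key : ∀ z ∈ Icc a b, (fun u => Vmod c p a b B u - Vf c p u) z =
      (fun u => Vmod c p a b B u - Vf c p u) a := by
    apply constant_of_has_deriv_right_zero
    · exact continuousOn_of_forall_continuousAt fun z hz => (hd z hz).continuousAt
    · exact fun z hz => (hd z (Ico_subset_Icc_self hz)).hasDerivWithinAt
  have hb0 : Vmod c p a b B b - Vf c p b = 0 := by
    rw [Vmod_b hp, hVb]; ring
  have ha0 : Vmod c p a b B a - Vf c p a = 0 := by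
    have := key b (right_mem_Icc.mpr hab)
    simp only at this
    linarith
  have := key x hx
  simp only at this
  linarith

lemma Vmod_gt_B_right (hp : 0 < p) (hab : a ≤ b) (hfb : ff c p b < 0)
    {x : ℝ} (hx : b < x) : B < Vmod c p a b B x := by
  have hcongr : ∀ s ∈ Icc b x, -(fmod c p a b s) = -(ff c p b) := by
    intro s hs
    unfold fmod
    rw [clampI_eq_hi hab hs.1]
  have : (∫ s in b..x, -(fmod c p a b s)) = (x - b) • (-(ff c p b)) := by
    rw [intervalIntegral.integral_congr (g := fun _ => -(ff c p b))
      (by rwa [uIcc_of_le hx.le]), intervalIntegral.integral_const]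
  unfold Vmod
  rw [this]
  have : 0 < (x - b) * (-(ff c p b)) := mul_pos (by linarith) (by linarith)
  simp only [smul_eq_mul]
  linarith

lemma Vmod_gt_B_left (hp : 0 < p) (hab : a ≤ b) (hfa : 0 < ff c p a) (hVa : Vf c p a = B)
    (hVb : Vf c p b = B) {x : ℝ} (hx : x < a) : B < Vmod c p a b B x := by
  have hint : ∀ u v : ℝ, IntervalIntegrable (fun s => -(fmod c p a b s)) volume u v :=
    fun u v => ((continuous_fmod hp).neg).intervalIntegrable u v
  have hadd : Vmod c p a b B x = Vmod c p a b B a + ∫ s in a..x, -(fmod c p a b s) := by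
    unfold Vmod
    rw [add_assoc, intervalIntegral.integral_add_adjacent_intervals (hint b a) (hint a x)]
  have hVma : Vmod c p a b B a = B := by
    rw [Vmod_eq_Vf hp hab hVb (left_mem_Icc.mpr hab), hVa]
  have hcongr : ∀ s ∈ Icc x a, -(fmod c p a b s) = -(ff c p a) := by
    intro s hs
    unfold fmod
    rw [clampI_eq_lo hs.2]
  have hval : (∫ s in a..x, -(fmod c p a b s)) = (a - x) * ff c p a := by
    rw [intervalIntegral.integral_symm, intervalIntegral.integral_congr
      (g := fun _ => -(ff c p a)) (by rwa [uIcc_of_le hx.le]), intervalIntegral.integral_const]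
    simp only [smul_eq_mul]
    ring
  rw [hadd, hVma, hval]
  have : 0 < (a - x) * ff c p a := mul_pos (by linarith) hfa
  linarith

lemma Gf_eq_sq (hM : 0 ≤ M) {y : ℝ} (hy : |y| ≤ M) : Gf M y = y ^ 2 / 2 := by
  have hcongr : ∀ s ∈ uIcc (0:ℝ) y, clampI (-M) M s = s := by
    intro s hs
    apply clampI_eq
    rw [abs_le] at hy
    rcases le_total 0 y with h | h
    · rw [uIcc_of_le h] at hs
      exact ⟨by linarith [hs.1], by linarith [hs.2]⟩
    · rw [uIcc_of_ge h] at hs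
      exact ⟨by linarith [hs.1], by linarith [hs.2]⟩
  unfold Gf
  rw [intervalIntegral.integral_congr (g := fun s => s) hcongr, integral_id]
  ring

lemma Gf_nonneg (hM : 0 ≤ M) (y : ℝ) : 0 ≤ Gf M y := by
  unfold Gf
  rcases le_total 0 y with h | h
  · apply intervalIntegral.integral_nonneg h
    intro u hu
    exact le_trans (le_min hM hu.1) (le_max_right _ _)
  · rw [intervalIntegral.integral_symm y 0]
    have h0 : 0 ≤ ∫ s in y..0, -(clampI (-M) M s) := by
      apply intervalIntegral.integral_nonneg h
      intro u hu
      simp only [neg_nonneg]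
      exact max_le (by linarith) (le_trans (min_le_right _ _) hu.2)
    rw [intervalIntegral.integral_neg] at h0
    linarith

lemma Gf_le_imp_abs_le (hM : 0 < M) {y : ℝ} (h : Gf M y ≤ M ^ 2 / 2) : |y| ≤ M := by
  by_contra h'
  push_neg at h'
  have hint : ∀ u v : ℝ, IntervalIntegrable (clampI (-M) M) volume u v :=
    fun u v => continuous_clampM.intervalIntegrable u v
  have hMM : Gf M M = M ^ 2 / 2 := Gf_eq_sq hM.le (by rw [abs_of_nonneg hM.le])
  have hMM' : Gf M (-M) = M ^ 2 / 2 := by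
    rw [Gf_eq_sq hM.le (by rw [abs_neg, abs_of_nonneg hM.le])]
    ring
  rcases le_total 0 y with hy | hy
  · have hyM : M < y := lt_of_lt_of_le h' (le_of_eq (abs_of_nonneg hy))
    have hsplit : Gf M y = Gf M M + ∫ s in M..y, clampI (-M) M s := by
      unfold Gf
      rw [intervalIntegral.integral_add_adjacent_intervals (hint 0 M) (hint M y)]
    have hconst : (∫ s in M..y, clampI (-M) M s) = (y - M) * M := by
      rw [intervalIntegral.integral_congr (g := fun _ => M) (fun s hs => by
        rw [uIcc_of_le hyM.le] at hs
        exact clampI_eq_hi (by linarith) hs.1), intervalIntegral.integral_const]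
      simp [smul_eq_mul]
    rw [hsplit, hconst, hMM] at h
    nlinarith
  · have hyM : y < -M := by
      have habs : |y| = -y := abs_of_nonpos hy
      rw [habs] at h'
      linarith
    have hsplit : Gf M y = Gf M (-M) + ∫ s in (-M)..y, clampI (-M) M s := by
      unfold Gf
      rw [intervalIntegral.integral_add_adjacent_intervals (hint 0 (-M)) (hint (-M) y)]
    have hconst : (∫ s in (-M)..y, clampI (-M) M s) = (y + M) * (-M) := by
      rw [intervalIntegral.integral_symm, intervalIntegral.integral_congr
        (g := fun _ => -M) (fun s hs => by
          rw [uIcc_of_le hyM.le] at hs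
          exact clampI_eq_lo hs.2), intervalIntegral.integral_const]
      simp [smul_eq_mul]
      ring
    rw [hsplit, hconst, hMM'] at h
    nlinarith

end part5

noncomputable section part6

open MeasureTheory

variable {c p a b B : ℝ}

lemma exists_XY (hc : 0 < c) (hp : 0 < p)
    (ha : 0 < a) (haS : a < ((p+1)*c) ^ (1/p : ℝ)) (hSb : ((p+1)*c) ^ (1/p : ℝ) < b)
    (hVa : Vf c p a = B) (hVb : Vf c p b = B)
    (hBB0 : Vf c p (((p+1)*c) ^ (1/p : ℝ)) < B) :
    ∃ X Y : ℝ → ℝ, X 0 = b ∧ Y 0 = 0 ∧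
      (∀ t, HasDerivAt X (Y t) t) ∧ (∀ t, HasDerivAt Y (ff c p (X t)) t) ∧
      (∀ t, X t ∈ Icc a b) ∧ (∀ t, (Y t) ^ 2 / 2 + Vf c p (X t) = B) ∧
      (∀ T, Y T = 0 → ∀ t, X (2*T - t) = X t ∧ Y (2*T - t) = -(Y t)) := by
  set S := ((p+1)*c) ^ (1/p : ℝ) with hSdef
  have hS0 : 0 < S := sStar_pos hc hp
  set M := Real.sqrt (2*(B - Vf c p S)) with hMdef
  have hM : 0 < M := Real.sqrt_pos.mpr (by linarith)
  have hM2 : M ^ 2 = 2*(B - Vf c p S) := Real.sq_sqrt (by linarith)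
  have hab : a ≤ b := le_trans haS.le hSb.le
  have hb0 : 0 < b := lt_trans hS0 hSb
  have hfa : 0 < ff c p a := ff_pos hc hp ha haS
  have hfb : ff c p b < 0 := ff_neg hc hp hSb
  -- Lipschitz data
  have hnn : (0:ℝ) ≤ c + b ^ p := by
    have := Real.rpow_nonneg hb0.le p
    linarith
  set Kf : NNReal := Real.toNNReal (c + b ^ p) with hKf
  have hffLip : LipschitzOnWith Kf (ff c p) (Icc a b) := by
    apply Convex.lipschitzOnWith_of_nnnorm_hasDerivWithin_le (f' := fun x => c - x ^ p)
      (convex_Icc _ _) (fun x _ => (hasDerivAt_ff hp x).hasDerivWithinAt)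
    intro x hx
    rw [← NNReal.coe_le_coe, coe_nnnorm, hKf, Real.coe_toNNReal _ hnn, Real.norm_eq_abs]
    have h1 : 0 ≤ x ^ p := Real.rpow_nonneg (le_trans ha.le hx.1) p
    have h2 : x ^ p ≤ b ^ p := Real.rpow_le_rpow (le_trans ha.le hx.1) hx.2 hp.le
    rw [abs_le]
    constructor <;> linarith
  have hfmodLip : LipschitzWith (Kf * 1) (fmod c p a b) := by
    rw [← lipschitzOnWith_univ]
    exact hffLip.comp ((lipschitzWith_clampI a b).lipschitzOnWith) (fun x _ => clampI_mem hab x)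
  set vfield : ℝ × ℝ → ℝ × ℝ := fun z => (clampI (-M) M z.2, fmod c p a b z.1) with hvf
  have hv1 : LipschitzWith (1 * 1) (fun z : ℝ × ℝ => clampI (-M) M z.2) :=
    (lipschitzWith_clampI _ _).comp LipschitzWith.prod_snd
  have hv2 : LipschitzWith (Kf * 1 * 1) (fun z : ℝ × ℝ => fmod c p a b z.1) :=
    hfmodLip.comp LipschitzWith.prod_fst
  have hvLip : LipschitzWith (max (1*1) (Kf*1*1)) vfield := hv1.prodMk hv2
  obtain ⟨Cf, hCf⟩ := (isCompact_Icc (a := a) (b := b)).exists_bound_of_continuousOn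
    (continuous_ff hp).continuousOn
  have hbd : ∀ z, ‖vfield z‖ ≤ max M Cf := by
    intro z
    rw [Prod.norm_def]
    apply max_le_max
    · rw [Real.norm_eq_abs]
      exact abs_clampI_le hM.le _
    · exact hCf _ (clampI_mem hab _)
  obtain ⟨α, hα0, hαd⟩ := ode_global_exist hvLip hbd (b, 0)
  set X : ℝ → ℝ := fun t => (α t).1 with hXdef
  set Y : ℝ → ℝ := fun t => (α t).2 with hYdef
  have hX0 : X 0 = b := by rw [hXdef]; simp [hα0]
  have hY0 : Y 0 = 0 := by rw [hYdef]; simp [hα0]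
  have hXd : ∀ t, HasDerivAt X (clampI (-M) M (Y t)) t := by
    intro t
    exact ((ContinuousLinearMap.fst ℝ ℝ ℝ).hasFDerivAt.comp_hasDerivAt t (hαd t))
  have hYd : ∀ t, HasDerivAt Y (fmod c p a b (X t)) t := by
    intro t
    exact ((ContinuousLinearMap.snd ℝ ℝ ℝ).hasFDerivAt.comp_hasDerivAt t (hαd t))
  -- conserved quantity
  set H : ℝ → ℝ := fun t => Gf M (Y t) + Vmod c p a b B (X t) with hHdef
  have hHd : ∀ t, HasDerivAt H 0 t := by
    intro t
    have h1 := ((hasDerivAt_Gf (M := M) (Y t)).comp t (hYd t)).add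
      (((hasDerivAt_Vmod (c:=c) (a:=a) (b:=b) (B:=B) hp (X t))).comp t (hXd t))
    refine h1.congr_deriv ?_
    ring
  have hHconst : ∀ t, H t = B := by
    intro t
    have h1 : H t = H 0 := is_const_of_deriv_eq_zero
      (fun x => (hHd x).differentiableAt) (fun x => (hHd x).deriv) t 0
    rw [h1, hHdef]
    simp only [hX0, hY0, Vmod_b hp]
    have : Gf M 0 = 0 := by
      unfold Gf
      exact intervalIntegral.integral_same
    rw [this, zero_add]
  -- invariants
  have hVmod_ge : ∀ t, B < Vmod c p a b B (X t) ∨ X t ∈ Icc a b := by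
    intro t
    by_cases hmem : X t ∈ Icc a b
    · exact Or.inr hmem
    · left
      rcases lt_or_ge (X t) a with h | h
      · exact Vmod_gt_B_left hp hab hfa hVa hVb h
      · rcases lt_or_ge b (X t) with h' | h'
        · exact Vmod_gt_B_right hp hab hfb h'
        · exact absurd ⟨h, h'⟩ hmem
  have hXmem : ∀ t, X t ∈ Icc a b := by
    intro t
    rcases hVmod_ge t with h | h
    · exfalso
      have h1 := hHconst t
      have h2 : 0 ≤ Gf M (Y t) := Gf_nonneg hM.le _
      rw [hHdef] at h1
      simp only at h1
      linarith
    · exact h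
  have hVmodVf : ∀ t, Vmod c p a b B (X t) = Vf c p (X t) :=
    fun t => Vmod_eq_Vf hp hab hVb (hXmem t)
  have hGle : ∀ t, Gf M (Y t) ≤ M ^ 2 / 2 := by
    intro t
    have h1 := hHconst t
    rw [hHdef] at h1
    simp only at h1
    have h2 : Vf c p S ≤ Vf c p (X t) := Vf_ge_B₀ hc hp ha (hXmem t)
    rw [hVmodVf t] at h1
    rw [hM2]
    linarith
  have hYle : ∀ t, |Y t| ≤ M := fun t => Gf_le_imp_abs_le hM (hGle t)
  have hX : ∀ t, HasDerivAt X (Y t) t := by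
    intro t
    have := hXd t
    rwa [clampI_eq ⟨(abs_le.mp (hYle t)).1, (abs_le.mp (hYle t)).2⟩] at this
  have hY : ∀ t, HasDerivAt Y (ff c p (X t)) t := by
    intro t
    have := hYd t
    unfold fmod at this
    rwa [clampI_eq (hXmem t)] at this
  have hE : ∀ t, (Y t) ^ 2 / 2 + Vf c p (X t) = B := by
    intro t
    have h1 := hHconst t
    rw [hHdef] at h1
    simp only at h1
    rw [Gf_eq_sq hM.le (hYle t), hVmodVf t] at h1
    exact h1
  refine ⟨X, Y, hX0, hY0, hX, hY, hXmem, hE, ?_⟩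
  -- reflection symmetry
  intro T hYT t
  set β : ℝ → ℝ × ℝ := fun u => ((α (2*T - u)).1, -((α (2*T - u)).2)) with hβdef
  have hβd : ∀ u, HasDerivAt β (vfield (β u)) u := by
    intro u
    have hinner : HasDerivAt (fun w : ℝ => 2*T - w) (-1) u := by
      exact ((hasDerivAt_const u (2*T)).sub (hasDerivAt_id u)).congr_deriv (by norm_num)
    have comp1 : HasDerivAt (fun w => X (2*T - w)) (clampI (-M) M (Y (2*T - u)) * (-1)) u :=
      (hXd (2*T - u)).comp u hinner
    have comp2 : HasDerivAt (fun w => Y (2*T - w)) (fmod c p a b (X (2*T - u)) * (-1)) u :=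
      (hYd (2*T - u)).comp u hinner
    have pair := comp1.prodMk comp2.neg
    refine pair.congr_deriv (Eq.symm ?_)
    rw [hvf]
    simp only [hβdef]
    apply Prod.ext
    · show clampI (-M) M (-((α (2*T-u)).2)) = clampI (-M) M (Y (2*T - u)) * (-1)
      rw [clampI_neg hM.le]
      show -(clampI (-M) M (Y (2*T-u))) = _
      ring
    · show fmod c p a b (X (2*T - u)) = -(fmod c p a b (X (2*T - u)) * (-1))
      ring
  have hβT : β T = α T := by
    have h1 : 2*T - T = T := by ring
    rw [hβdef]
    simp only [h1]
    have h2 : -((α T).2) = (α T).2 := by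
      have h3 : (α T).2 = 0 := hYT
      rw [h3]; ring
    rw [h2]
  have hβα : β = α := ode_global_unique hvLip hβd hαd hβT
  have hco : ((α (2*T - t)).1, -((α (2*T - t)).2)) = α t := congrFun hβα t
  have hfst := congrArg Prod.fst hco
  have hsnd := congrArg Prod.snd hco
  simp only at hfst hsnd
  refine ⟨hfst, ?_⟩
  show (α (2*T - t)).2 = -((α t).2)
  linarith [hsnd]

end part6

section part7

variable {c p a b B : ℝ} {X Y : ℝ → ℝ}

lemma exists_T (hc : 0 < c) (hp : 0 < p)
    (ha : 0 < a) (haS : a < ((p+1)*c) ^ (1/p : ℝ)) (hSb : ((p+1)*c) ^ (1/p : ℝ) < b)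
    (hVa : Vf c p a = B) (hVb : Vf c p b = B)
    (hX0 : X 0 = b) (hY0 : Y 0 = 0)
    (hX : ∀ t, HasDerivAt X (Y t) t) (hY : ∀ t, HasDerivAt Y (ff c p (X t)) t)
    (hXmem : ∀ t, X t ∈ Icc a b) (hE : ∀ t, (Y t) ^ 2 / 2 + Vf c p (X t) = B) :
    ∃ T, 0 < T ∧ Y T = 0 := by
  by_contra hno
  push_neg at hno
  have hfa : 0 < ff c p a := ff_pos hc hp ha haS
  have hfb : ff c p b < 0 := ff_neg hc hp hSb
  have hab : a ≤ b := le_trans haS.le hSb.le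
  have hcontX : Continuous X := continuous_iff_continuousAt.mpr fun t => (hX t).continuousAt
  have hcontY : Continuous Y := continuous_iff_continuousAt.mpr fun t => (hY t).continuousAt
  -- Step 1: Y is negative at some positive time
  have step1 : ∃ t₁, 0 < t₁ ∧ Y t₁ < 0 := by
    have hY0d : HasDerivAt Y (ff c p b) 0 := by
      have := hY 0; rwa [hX0] at this
    have hslope := hasDerivAt_iff_tendsto_slope.mp hY0d
    have hev : ∀ᶠ t in nhdsWithin 0 {(0:ℝ)}ᶜ, slope Y 0 t < 0 :=
      hslope.eventually_lt_const hfb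
    have hmono : nhdsWithin (0:ℝ) (Ioi 0) ≤ nhdsWithin 0 {(0:ℝ)}ᶜ :=
      nhdsWithin_mono 0 (fun x hx => ne_of_gt hx)
    have hev2 : ∀ᶠ t in nhdsWithin (0:ℝ) (Ioi 0), slope Y 0 t < 0 := hmono hev
    have hself : ∀ᶠ t in nhdsWithin (0:ℝ) (Ioi 0), t ∈ Ioi (0:ℝ) := self_mem_nhdsWithin
    obtain ⟨t₁, hs, ht₁⟩ := (hev2.and hself).exists
    refine ⟨t₁, ht₁, ?_⟩
    have : slope Y 0 t₁ = Y t₁ / t₁ := by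
      rw [slope_def_field]
      rw [hY0]
      ring_nf
    rw [this] at hs
    have := mul_lt_mul_of_pos_right hs ht₁
    rwa [div_mul_cancel₀ _ (ne_of_gt ht₁), zero_mul] at this
  obtain ⟨t₁, ht₁pos, ht₁neg⟩ := step1
  -- Step 2: Y is negative on all positive times
  have hYneg : ∀ t, 0 < t → Y t < 0 := by
    intro t ht
    rcases lt_trichotomy (Y t) 0 with h | h | h
    · exact h
    · exact absurd h (hno t ht)
    · exfalso
      have h0mem : (0:ℝ) ∈ uIcc (Y t₁) (Y t) := by
        rw [mem_uIcc]
        left; exact ⟨ht₁neg.le, h.le⟩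
      obtain ⟨z, hz, hYz⟩ := intermediate_value_uIcc hcontY.continuousOn h0mem
      have hzpos : 0 < z := by
        rw [mem_uIcc] at hz
        rcases hz with ⟨h1, _⟩ | ⟨h1, _⟩ <;> [exact lt_of_lt_of_le ht₁pos h1;
          exact lt_of_lt_of_le ht h1]
      exact hno z hzpos hYz
  -- Step 3: X strictly decreasing on [0, ∞)
  have hXstrict : StrictAntiOn X (Ici 0) := by
    apply strictAntiOn_of_deriv_neg (convex_Ici 0) hcontX.continuousOn
    intro t ht
    rw [interior_Ici] at ht
    rw [(hX t).deriv]
    exact hYneg t ht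
  -- Step 4: limit of X
  set g : ℝ → ℝ := fun t => X (max t 0) with hgdef
  have hganti : Antitone g := by
    intro s t hst
    exact hXstrict.antitoneOn (le_max_right s 0) (le_max_right t 0)
      (max_le_max hst le_rfl)
  have hgbdd : BddBelow (range g) := ⟨a, fun x ⟨t, htx⟩ => htx ▸ (hXmem _).1⟩
  have hLtend : Filter.Tendsto g Filter.atTop (nhds (⨅ t, g t)) :=
    tendsto_atTop_ciInf hganti hgbdd
  set L := ⨅ t, g t with hLdef
  have hgX : ∀ᶠ t in Filter.atTop, g t = X t := by
    filter_upwards [Filter.eventually_ge_atTop (0:ℝ)] with t ht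
    rw [hgdef]; simp [max_eq_left ht]
  have hXtendL : Filter.Tendsto X Filter.atTop (nhds L) := hLtend.congr' hgX
  have hLa : a ≤ L := le_ciInf fun t => (hXmem _).1
  have hLle : ∀ t, L ≤ g t := fun t => ciInf_le hgbdd t
  have hLb : L < b := by
    have h1 : L ≤ g 1 := hLle 1
    have h2 : g 1 = X 1 := by rw [hgdef]; norm_num
    have h3 : X 1 < X 0 := hXstrict (mem_Ici.mpr (le_refl 0 |>.trans (le_refl 0))) (by norm_num : (1:ℝ) ∈ Ici 0) one_pos
    rw [hX0] at h3
    rw [h2] at h1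
    linarith
  have hVLB : Vf c p L ≤ B := by
    have htend : Filter.Tendsto (fun t => Vf c p (X t)) Filter.atTop (nhds (Vf c p L)) :=
      ((continuous_Vf hp).continuousAt.tendsto).comp hXtendL
    apply le_of_tendsto htend
    filter_upwards with t
    have := hE t
    nlinarith [sq_nonneg (Y t)]
  -- the limiting speed
  set F : ℝ → ℝ := fun x => -Real.sqrt (2*(B - Vf c p x)) with hFdef
  have hFcont : Continuous F :=
    (Real.continuous_sqrt.comp (continuous_const.mul (continuous_const.sub (continuous_Vf hp)))).neg
  have hW : ∀ t, 0 < t → Y t = F (X t) := by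
    intro t ht
    have h1 : (Y t) ^ 2 = 2*(B - Vf c p (X t)) := by
      have := hE t; ring_nf; ring_nf at this ⊢; linarith
    rw [hFdef]
    simp only
    rw [← h1, Real.sqrt_sq_eq_abs, abs_of_neg (hYneg t ht)]
    ring
  have hYtend : Filter.Tendsto Y Filter.atTop (nhds (F L)) := by
    have h1 : Filter.Tendsto (F ∘ X) Filter.atTop (nhds (F L)) :=
      (hFcont.continuousAt.tendsto).comp hXtendL
    apply h1.congr'
    filter_upwards [Filter.eventually_gt_atTop (0:ℝ)] with t ht
    exact (hW t ht).symm
  have hsqrt_nonneg : 0 ≤ Real.sqrt (2*(B - Vf c p L)) := Real.sqrt_nonneg _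
  rcases eq_or_lt_of_le hsqrt_nonneg with hyL0 | hyLpos
  · -- case sqrt = 0 : L = a, contradiction via Y' → ff a > 0
    have hVLeq : Vf c p L = B := by
      have h := Real.sqrt_eq_zero'.mp hyL0.symm
      linarith
    have hLeqa : L = a := by
      by_contra hne
      have hLa' : a < L := lt_of_le_of_ne hLa (Ne.symm hne)
      have := Vf_lt_B hc hp ha haS hSb hVa hVb ⟨hLa', hLb⟩
      linarith
    have hffatend : Filter.Tendsto (fun t => ff c p (X t)) Filter.atTop (nhds (ff c p a)) := by
      have := ((continuous_ff (c:=c) hp).continuousAt.tendsto).comp hXtendL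
      rwa [hLeqa] at this
    have hev : ∀ᶠ t in Filter.atTop, ff c p a / 2 < ff c p (X t) :=
      hffatend.eventually_const_lt (by linarith)
    rw [Filter.eventually_atTop] at hev
    obtain ⟨t₄, ht₄⟩ := hev
    set t₅ := max t₄ 1 with ht₅def
    have ht₅1 : (1:ℝ) ≤ t₅ := le_max_right _ _
    have ht₅4 : t₄ ≤ t₅ := le_max_left _ _
    -- Y grows at least linearly on [t₅, ∞)
    have hmono : MonotoneOn (fun t => Y t - (ff c p a / 2) * t) (Ici t₅) := by
      apply monotoneOn_of_deriv_nonneg (convex_Ici _)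
        (hcontY.sub (continuous_const.mul continuous_id)).continuousOn
      · intro t ht
        exact ((hY t).sub ((hasDerivAt_id t).const_mul _)).differentiableAt.differentiableWithinAt
      · intro t ht
        rw [interior_Ici] at ht
        rw [show deriv (Y - (fun x => ff c p a / 2) * id) t = ff c p (X t) - ff c p a / 2 * 1 from ((hY t).sub ((hasDerivAt_id t).const_mul _)).deriv]
        have := ht₄ t (le_trans ht₅4 ht.le)
        simp only [mul_one]
        linarith
    -- choose large time
    set tb := t₅ + (1 - Y t₅) / (ff c p a / 2) with htbdef
    have htb5 : t₅ ≤ tb := by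
      rw [htbdef]
      have h1 : 0 < ff c p a / 2 := by linarith
      have h2 : 0 ≤ 1 - Y t₅ := by
        have := hYneg t₅ (by linarith)
        linarith
      have := div_nonneg h2 h1.le
      linarith
    have := hmono (le_refl t₅ |>.trans (le_refl t₅)) (mem_Ici.mpr htb5) htb5
    have hYtb : Y tb < 0 := hYneg tb (by linarith)
    rw [htbdef] at this
    have h1 : 0 < ff c p a / 2 := by linarith
    have key : Y (t₅ + (1 - Y t₅) / (ff c p a / 2)) ≥ Y t₅ + (ff c p a / 2) * ((1 - Y t₅) / (ff c p a / 2)) := by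
      have h2 := this
      simp only at h2
      nlinarith [h2]
    rw [mul_div_cancel₀ _ (ne_of_gt h1)] at key
    rw [htbdef] at hYtb
    linarith
  · -- case sqrt > 0 : X decreases linearly, exits [a,b]
    set yL := Real.sqrt (2*(B - Vf c p L)) with hyLdef
    have hev : ∀ᶠ t in Filter.atTop, Y t < -yL/2 := by
      apply hYtend.eventually_lt_const
      rw [hFdef]
      simp only [← hyLdef]
      linarith
    rw [Filter.eventually_atTop] at hev
    obtain ⟨t₃, ht₃⟩ := hev
    set t₅ := max t₃ 0 with ht₅def
    have ht₅3 : t₃ ≤ t₅ := le_max_left _ _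
    have hanti : AntitoneOn (fun t => X t + (yL/2) * t) (Ici t₅) := by
      apply antitoneOn_of_deriv_nonpos (convex_Ici _)
        (hcontX.add (continuous_const.mul continuous_id)).continuousOn
      · intro t ht
        exact ((hX t).add ((hasDerivAt_id t).const_mul _)).differentiableAt.differentiableWithinAt
      · intro t ht
        rw [interior_Ici] at ht
        rw [show deriv (X + (fun x => yL / 2) * id) t = Y t + yL / 2 * 1 from ((hX t).add ((hasDerivAt_id t).const_mul _)).deriv]
        have := ht₃ t (le_trans ht₅3 ht.le)
        simp only [mul_one]
        linarith
    set tb := t₅ + (X t₅ - a + 1) / (yL/2) with htbdef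
    have hyL2 : 0 < yL/2 := by linarith
    have htb5 : t₅ ≤ tb := by
      rw [htbdef]
      have h2 : 0 ≤ X t₅ - a + 1 := by
        have := (hXmem t₅).1
        linarith
      have := div_nonneg h2 hyL2.le
      linarith
    have hkey := hanti (mem_Ici.mpr (le_refl t₅)) (mem_Ici.mpr htb5) htb5
    simp only at hkey
    rw [htbdef] at hkey
    have hexp : X (t₅ + (X t₅ - a + 1) / (yL/2)) ≤ X t₅ - (X t₅ - a + 1) := by
      have h3 : yL/2 * ((X t₅ - a + 1) / (yL/2)) = X t₅ - a + 1 :=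
        mul_div_cancel₀ _ (ne_of_gt hyL2)
      nlinarith [hkey, h3]
    have := (hXmem (t₅ + (X t₅ - a + 1) / (yL/2))).1
    linarith

end part7

/-- For every B with B₀ < B < 0 (where
B₀ = -p(p+1)^{2/p} c^{(p+2)/p}/(2(p+2))), there exists a nonconstant, everywhere positive,
periodic, C² solution φ of -φ'' + cφ - φ^{p+1}/(p+1) = 0 with energy E(φ, φ') ≡ B. -/
theorem stmt_2 (c p : ℝ) (hc : 0 < c) (hp : 0 < p) (B : ℝ)
    (hB0 : -(p * (p + 1) ^ (2 / p) * c ^ ((p + 2) / p)) / (2 * (p + 2)) < B)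
    (hB : B < 0) :
    ∃ φ : ℝ → ℝ, ContDiff ℝ 2 φ ∧ (∀ x, 0 < φ x) ∧
      (∃ L > 0, Function.Periodic φ L) ∧
      (∃ x y, φ x ≠ φ y) ∧
      (∀ x, -(deriv (deriv φ) x) + c * φ x - φ x ^ (p + 1) / (p + 1) = 0) ∧
      (∀ x, (deriv φ x) ^ 2 / 2 - c * (φ x) ^ 2 / 2
        + φ x ^ (p + 2) / ((p + 1) * (p + 2)) = B) := by
  have hBB0 : Vf c p (((p+1)*c) ^ (1/p : ℝ)) < B := by
    rw [Vf_sStar hc hp]; exact hB0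
  obtain ⟨a, b, ha, haS, hSb, hVa, hVb⟩ := exists_ab hc hp hBB0 hB
  obtain ⟨X, Y, hX0, hY0, hX, hY, hXmem, hE, hrefl⟩ :=
    exists_XY hc hp ha haS hSb hVa hVb hBB0
  obtain ⟨T, hT, hYT⟩ := exists_T hc hp ha haS hSb hVa hVb hX0 hY0 hX hY hXmem hE
  have hcontX : Continuous X := continuous_iff_continuousAt.mpr fun t => (hX t).continuousAt
  have derivX : deriv X = Y := funext fun t => (hX t).deriv
  have derivY : deriv Y = fun t => ff c p (X t) := funext fun t => (hY t).deriv
  refine ⟨X, ?_, ?_, ?_, ?_, ?_, ?_⟩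
  · -- C²
    rw [show (2 : WithTop ℕ∞) = 1 + 1 from rfl, contDiff_succ_iff_deriv]
    refine ⟨fun t => (hX t).differentiableAt, by simp, ?_⟩
    rw [derivX, contDiff_one_iff_deriv]
    refine ⟨fun t => (hY t).differentiableAt, ?_⟩
    rw [derivY]
    exact (continuous_ff hp).comp hcontX
  · -- positivity
    intro x
    exact lt_of_lt_of_le ha (hXmem x).1
  · -- periodicity
    refine ⟨2*T, by linarith, ?_⟩
    intro x
    have h1 := (hrefl T hYT (-x)).1
    have h2 := (hrefl 0 hY0 x).1
    rw [show 2*T - -x = x + 2*T by ring] at h1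
    rw [show 2*0 - x = -x by ring] at h2
    rw [h1, h2]
  · -- nonconstant
    by_contra hcon
    push_neg at hcon
    have hYzero : ∀ t, Y t = 0 := by
      intro t
      have hconst : HasDerivAt (fun _ : ℝ => X 0) (Y t) t :=
        (hX t).congr_of_eventuallyEq (Filter.Eventually.of_forall fun s => (hcon s 0).symm)
      exact ((hasDerivAt_const t (X 0)).unique hconst).symm
    have hzero : HasDerivAt (fun _ : ℝ => (0:ℝ)) (ff c p (X 0)) 0 :=
      (hY 0).congr_of_eventuallyEq (Filter.Eventually.of_forall fun s => (hYzero s).symm)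
    have : ff c p (X 0) = 0 := ((hasDerivAt_const (0:ℝ) (0:ℝ)).unique hzero).symm
    rw [hX0] at this
    have := ff_neg hc hp hSb
    linarith
  · -- ODE
    intro x
    rw [derivX, derivY]
    show -(ff c p (X x)) + c * X x - X x ^ (p + 1) / (p + 1) = 0
    unfold ff
    ring
  · -- energy
    intro x
    rw [derivX]
    have := hE x
    unfold Vf at this
    linarith
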